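/- Let G = (V,E) be a finite simple graph and B a 2-branch of G with umbrella ordering σ_B and with B^R ≠ ∅, and let x be a vertex of B^R. Then every K-join B' of G that contains x and is maximal under inclusion among K-joins containing x satisfies B' = {w ∈ B : u ≤_{σ_B} w ≤_{σ_B} v} for some extremal edge uv of σ_B. -/

import Mathlib

open SimpleGraph Finset

variable {V : Type*}

/-- `f` is an (injective, hence linear) umbrella ordering of the graph `G`. -/
def IsUmbrellaOrdering (G : SimpleGraph V) (f : V → ℕ) : Prop :=
  Function.Injective f ∧
    ∀ u v w : V, f u < f v → f v < f w → G.Adj u w → G.Adj u v ∧ G.Adj v w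

/-- A graph is a proper interval graph iff it admits an umbrella ordering. -/
def IsProperIntervalGraph (G : SimpleGraph V) : Prop :=
  ∃ f : V → ℕ, IsUmbrellaOrdering G f

/-- The graph `G + F` obtained by adding the set `F` of pairs as edges. -/
def addEdges (G : SimpleGraph V) (F : Finset (Sym2 V)) : SimpleGraph V :=
  G ⊔ SimpleGraph.fromEdgeSet ↑F

/-- `F` is a completion of `G`: a set of non-loop non-edges whose addition
makes `G` a proper interval graph. -/
def IsCompletion (G : SimpleGraph V) (F : Finset (Sym2 V)) : Prop :=
  (∀ e ∈ F, ¬ e.IsDiag) ∧ (∀ e ∈ F, e ∉ G.edgeSet) ∧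
    IsProperIntervalGraph (addEdges G F)

/-- `F` is a `k`-completion of `G`. -/
def IsKCompletion (G : SimpleGraph V) (k : ℕ) (F : Finset (Sym2 V)) : Prop :=
  IsCompletion G F ∧ F.card ≤ k

/-- `uv` is an extremal edge of `G` with respect to the ordering `f`. -/
def IsExtremalEdge (G : SimpleGraph V) (f : V → ℕ) (u v : V) : Prop :=
  G.Adj u v ∧ f u < f v ∧
    ∀ u' v' : V, G.Adj u' v' → f u' ≤ f u → f v ≤ f v' → u' = u ∧ v' = v

/-- `c` is the center and `l₁, l₂, l₃` the leaves of an induced claw of `G`. -/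
def IsClaw (G : SimpleGraph V) (c l₁ l₂ l₃ : V) : Prop :=
  G.Adj c l₁ ∧ G.Adj c l₂ ∧ G.Adj c l₃ ∧
    ¬ G.Adj l₁ l₂ ∧ ¬ G.Adj l₁ l₃ ∧ ¬ G.Adj l₂ l₃ ∧ l₁ ≠ l₂ ∧ l₁ ≠ l₃ ∧ l₂ ≠ l₃

/-- `a b c d` is an induced 4-cycle of `G` (in this cyclic order). -/
def IsInducedC4 (G : SimpleGraph V) (a b c d : V) : Prop :=
  G.Adj a b ∧ G.Adj b c ∧ G.Adj c d ∧ G.Adj d a ∧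
    ¬ G.Adj a c ∧ ¬ G.Adj b d ∧ a ≠ c ∧ b ≠ d

/-- `x` belongs to some claw of `G` (as center or leaf). -/
def InClaw (G : SimpleGraph V) (x : V) : Prop :=
  ∃ a b c d, IsClaw G a b c d ∧ (x = a ∨ x = b ∨ x = c ∨ x = d)

/-- `x` belongs to some induced 4-cycle of `G`. -/
def InC4 (G : SimpleGraph V) (x : V) : Prop :=
  ∃ a b c d, IsInducedC4 G a b c d ∧ (x = a ∨ x = b ∨ x = c ∨ x = d)

/-- `{x, y, z}` is an independent set of size 3 (a `3K₁`) of `G`. -/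
def IsInd3 (G : SimpleGraph V) (x y z : V) : Prop :=
  x ≠ y ∧ x ≠ z ∧ y ≠ z ∧ ¬ G.Adj x y ∧ ¬ G.Adj x z ∧ ¬ G.Adj y z

/-- `x` belongs to some independent set of size 3 of `G`. -/
def InInd3 (G : SimpleGraph V) (x : V) : Prop := ∃ y z, IsInd3 G x y z

/-- `G` is sunflower-reduced (for the parameter `k`). -/
def SunflowerReduced (G : SimpleGraph V) (k : ℕ) : Prop :=
  ∀ u v : V, u ≠ v → ¬ G.Adj u v →
    {w : V | ∃ c, IsClaw G c u v w}.ncard ≤ k ∧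
    {e : Sym2 V | ∃ a b, e = s(a, b) ∧ IsInducedC4 G u a v b}.ncard ≤ k

/-- `u` and `v` are true twins of `G`: they have the same closed neighborhood. -/
def TrueTwins (G : SimpleGraph V) (u v : V) : Prop :=
  insert u (G.neighborSet u) = insert v (G.neighborSet v)

/-- `b : Fin p → V` enumerates a `K`-join of `G` whose complement is
partitioned into `N`, `L`, `R`, `C`. -/
structure KJoinWith (G : SimpleGraph V) {p : ℕ} (b : Fin p → V)
    (N L R C : Set V) : Prop where
  inj : Function.Injective b
  clique : ∀ i j : Fin p, i ≠ j → G.Adj (b i) (b j)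
  cover : ∀ v : V, v ∉ Set.range b → v ∈ N ∪ L ∪ R ∪ C
  disj : List.Pairwise Disjoint [Set.range b, N, L, R, C]
  nAdj : ∀ v ∈ N, ∀ i, G.Adj v (b i)
  cNotAdj : ∀ v ∈ C, ∀ i, ¬ G.Adj v (b i)
  lrAdj : ∀ v ∈ L ∪ R, ∃ i, G.Adj v (b i)
  lrNotAll : ∀ v ∈ L ∪ R, ∃ i, ¬ G.Adj v (b i)
  rFirst : ∀ r ∈ R, ∀ i : Fin p, i.val = 0 → ¬ G.Adj r (b i)
  lLast : ∀ x ∈ L, ∀ i : Fin p, i.val = p - 1 → ¬ G.Adj x (b i)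
  rMono : ∀ i j : Fin p, i.val + 1 = j.val → ∀ r ∈ R, G.Adj (b i) r → G.Adj (b j) r
  lMono : ∀ i j : Fin p, i.val + 1 = j.val → ∀ x ∈ L, G.Adj (b j) x → G.Adj (b i) x

/-- `B ⊆ V` is a `K`-join of `G`. -/
def IsKJoin (G : SimpleGraph V) (B : Set V) : Prop :=
  ∃ (p : ℕ) (b : Fin p → V) (N L R C : Set V),
    Set.range b = B ∧ KJoinWith G b N L R C

/-- `B` is a clean `K`-join: none of its vertices belongs to a claw or an
induced 4-cycle of `G`. -/
def IsCleanKJoin (G : SimpleGraph V) (B : Set V) : Prop :=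
  IsKJoin G B ∧ ∀ x ∈ B, ¬ InClaw G x ∧ ¬ InC4 G x

/-- `B ⊆ V` is a simple `K`-join of `G` (one of `L`, `R` is empty). -/
def IsSimpleKJoin (G : SimpleGraph V) (B : Set V) : Prop :=
  ∃ (p : ℕ) (b : Fin p → V) (N L R C : Set V),
    Set.range b = B ∧ KJoinWith G b N L R C ∧ (L = ∅ ∨ R = ∅)

/-- `B` is bcc-clean: none of its vertices belongs to a `3K₁` or an induced
4-cycle of `G`. -/
def IsBccClean (G : SimpleGraph V) (B : Set V) : Prop :=
  ∀ x ∈ B, ¬ InInd3 G x ∧ ¬ InC4 G x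

/-- `b : Fin p → V` enumerates (in umbrella order) a 1-branch of `G` with
complement partitioned into `R`, `C`; `b l` is the neighbor of the last
vertex `b (p-1)` of minimal index.  The attachment clique is
`B₁ = {b i : l ≤ i}` and `B^R = {b i : i < l}`. -/
structure OneBranch (G : SimpleGraph V) {p : ℕ} (b : Fin p → V)
    (R C : Set V) (l : Fin p) : Prop where
  pos : 0 < p
  inj : Function.Injective b
  umbrella : ∀ i j m : Fin p, i < j → j < m → G.Adj (b i) (b m) →
    G.Adj (b i) (b j) ∧ G.Adj (b j) (b m)
  connB : (G.induce (Set.range b)).Connected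
  cover : ∀ v : V, v ∉ Set.range b → v ∈ R ∪ C
  disj : List.Pairwise Disjoint [Set.range b, R, C]
  noBC : ∀ v ∈ C, ∀ i, ¬ G.Adj v (b i)
  rNbr : ∀ v ∈ R, ∃ i, G.Adj v (b i)
  lMin : ∀ j : Fin p, j < l → ¬ G.Adj (b j) (b ⟨p - 1, Nat.sub_lt pos Nat.one_pos⟩)
  lNbr : l.val = p - 1 ∨ G.Adj (b l) (b ⟨p - 1, Nat.sub_lt pos Nat.one_pos⟩)
  noEarlyR : ∀ j : Fin p, j < l → ∀ r ∈ R, ¬ G.Adj r (b j)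
  rMono : ∀ i j : Fin p, l ≤ i → i.val + 1 = j.val → ∀ r ∈ R,
    G.Adj (b i) r → G.Adj (b j) r

/-- `b : Fin p → V` enumerates (in umbrella order) a 2-branch of `G` with
complement partitioned into `L`, `R`, `C`; `b l` is the neighbor of `b (p-1)`
of minimal index and `b l'` is the neighbor of `b 0` of maximal index.  The
attachment cliques are `B₁ = {b i : i ≤ l'}` and `B₂ = {b i : l ≤ i}`, and
`B^R = {b i : l' < i < l}`. -/
structure TwoBranch (G : SimpleGraph V) {p : ℕ} (b : Fin p → V)
    (L R C : Set V) (l l' : Fin p) : Prop where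
  pos : 0 < p
  inj : Function.Injective b
  umbrella : ∀ i j m : Fin p, i < j → j < m → G.Adj (b i) (b m) →
    G.Adj (b i) (b j) ∧ G.Adj (b j) (b m)
  connB : (G.induce (Set.range b)).Connected
  cover : ∀ v : V, v ∉ Set.range b → v ∈ L ∪ R ∪ C
  disj : List.Pairwise Disjoint [Set.range b, L, R, C]
  noBC : ∀ v ∈ C, ∀ i, ¬ G.Adj v (b i)
  lNbrEx : ∀ v ∈ L, ∃ i, G.Adj v (b i)
  rNbrEx : ∀ v ∈ R, ∃ i, G.Adj v (b i)
  lMin : ∀ j : Fin p, j < l → ¬ G.Adj (b j) (b ⟨p - 1, Nat.sub_lt pos Nat.one_pos⟩)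
  lNbr : l.val = p - 1 ∨ G.Adj (b l) (b ⟨p - 1, Nat.sub_lt pos Nat.one_pos⟩)
  lMax' : ∀ j : Fin p, l' < j → ¬ G.Adj (b ⟨0, pos⟩) (b j)
  lNbr' : l'.val = 0 ∨ G.Adj (b ⟨0, pos⟩) (b l')
  noEarlyR : ∀ j : Fin p, j < l → ∀ r ∈ R, ¬ G.Adj r (b j)
  noLateL : ∀ j : Fin p, l' < j → ∀ v ∈ L, ¬ G.Adj v (b j)
  rMono : ∀ i j : Fin p, l ≤ i → i.val + 1 = j.val → ∀ r ∈ R,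
    G.Adj (b i) r → G.Adj (b j) r
  lMono : ∀ i j : Fin p, j ≤ l' → i.val + 1 = j.val → ∀ v ∈ L,
    G.Adj (b j) v → G.Adj (b i) v

/-- `e : Fin q → Fin p` lists the last indices of the `q` K-joins of the
K-join decomposition of the 2-branch enumerated by `b` (with attachment
cliques ending at `l'` resp. starting at `l`). -/
def KJoinDecomp (G : SimpleGraph V) {p : ℕ} (b : Fin p → V) (l l' : Fin p)
    (q : ℕ) (e : Fin q → Fin p) : Prop :=
  0 < q ∧
  (∀ i : Fin q, i.val = 0 → e i = l') ∧
  (∀ i : Fin q, i.val = q - 1 → (e i).val = p - 1) ∧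
  StrictMono e ∧
  ∀ i j : Fin q, i.val + 1 = j.val →
    ∃ hs : (e i).val + 1 < p,
      (j.val + 1 < q →
        (⟨(e i).val + 1, hs⟩ : Fin p) < l ∧
        G.Adj (b ⟨(e i).val + 1, hs⟩) (b (e j)) ∧
        ∀ m : Fin p, G.Adj (b ⟨(e i).val + 1, hs⟩) (b m) → m ≤ e j) ∧
      (j.val + 1 = q → l ≤ (⟨(e i).val + 1, hs⟩ : Fin p))

/-- `G` is a bi-clique chain graph: two cliques joined by a join. -/
def IsBicliqueChain (G : SimpleGraph V) : Prop :=
  ∃ (q : ℕ) (x : Fin q → V) (Y : Set V),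
    Function.Injective x ∧
    Disjoint (Set.range x) Y ∧
    (∀ v : V, v ∈ Set.range x ∨ v ∈ Y) ∧
    (∀ i j : Fin q, i ≠ j → G.Adj (x i) (x j)) ∧
    G.IsClique Y ∧
    (∀ i j : Fin q, i ≤ j → ∀ y ∈ Y, G.Adj (x i) y → G.Adj (x j) y)

/-- `F` is a bcc-`k`-completion of `G`. -/
def IsBccKCompletion (G : SimpleGraph V) (k : ℕ) (F : Finset (Sym2 V)) : Prop :=
  (∀ e ∈ F, ¬ e.IsDiag) ∧ (∀ e ∈ F, e ∉ G.edgeSet) ∧ F.card ≤ k ∧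
    IsBicliqueChain (addEdges G F)

lemma interval_kjoin (G : SimpleGraph V) {p : ℕ} (b : Fin p → V)
    (L R C : Set V) (l l' : Fin p) (hB : TwoBranch G b L R C l l')
    (x u v : Fin p) (hx1 : l' < x) (hx2 : x < l)
    (hux : u ≤ x) (hxv : x ≤ v) (huv : u < v) (hadj : G.Adj (b u) (b v)) :
    IsKJoin G (b '' {w : Fin p | u ≤ w ∧ w ≤ v}) := by
  classical
  set Bs := b '' {w : Fin p | u ≤ w ∧ w ≤ v} with hBsdef
  -- the interval is a clique
  have hclq : ∀ i j : Fin p, u ≤ i → i < j → j ≤ v → G.Adj (b i) (b j) := by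
    intro i j hui hij hjv
    rcases eq_or_lt_of_le hui with hi | hi
    · rcases eq_or_lt_of_le hjv with hj | hj
      · rw [← hi, hj]; exact hadj
      · rw [← hi]; exact (hB.umbrella u j v (hi ▸ hij) hj hadj).1
    · have hiv : i < v := lt_of_lt_of_le hij hjv
      have h1 : G.Adj (b i) (b v) := (hB.umbrella u i v hi hiv hadj).2
      rcases eq_or_lt_of_le hjv with hj | hj
      · rw [hj]; exact h1
      · exact (hB.umbrella i j v hij hj h1).1
  -- vertices below the interval adjacent to `b v` are adjacent to everything
  have hallL : ∀ m : Fin p, m < u → G.Adj (b m) (b v) → ∀ i : Fin p,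
      u ≤ i → i ≤ v → G.Adj (b m) (b i) := by
    intro m hm hmv i hui hiv
    rcases eq_or_lt_of_le hiv with h | h
    · rw [h]; exact hmv
    · exact (hB.umbrella m i v (lt_of_lt_of_le hm hui) h hmv).1
  have hallR : ∀ m : Fin p, v < m → G.Adj (b u) (b m) → ∀ i : Fin p,
      u ≤ i → i ≤ v → G.Adj (b i) (b m) := by
    intro m hm hum i hui hiv
    rcases eq_or_lt_of_le hui with h | h
    · rw [← h]; exact hum
    · exact (hB.umbrella u i m h (lt_of_le_of_lt hiv hm) hum).2
  -- disjointness facts for the two-branch partition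
  have hdisj := hB.disj
  simp only [List.pairwise_cons, List.mem_cons, List.not_mem_nil,
    List.mem_singleton, List.Pairwise.nil] at hdisj
  have hdRL : Disjoint (Set.range b) L := hdisj.1 L (by simp)
  have hdRR : Disjoint (Set.range b) R := hdisj.1 R (by simp)
  have hdRC : Disjoint (Set.range b) C := hdisj.1 C (by simp)
  have hdLR : Disjoint L R := hdisj.2.1 R (by simp)
  -- auxiliary predicates
  let Padj : V → Prop := fun w => ∃ i : Fin p, u ≤ i ∧ i ≤ v ∧ G.Adj w (b i)
  let Pnon : V → Prop := fun w => ∃ i : Fin p, u ≤ i ∧ i ≤ v ∧ ¬ G.Adj w (b i)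
  let N : Set V := {w | w ∉ Bs ∧ ∀ i : Fin p, u ≤ i → i ≤ v → G.Adj w (b i)}
  let Cs : Set V := {w | w ∉ Bs ∧ ∀ i : Fin p, u ≤ i → i ≤ v → ¬ G.Adj w (b i)}
  let Ls : Set V := {w | w ∉ Bs ∧ Padj w ∧ Pnon w ∧
    (w ∈ L ∨ ∃ m : Fin p, m < u ∧ w = b m)}
  let Rs : Set V := {w | w ∉ Bs ∧ Padj w ∧ Pnon w ∧
    (w ∈ R ∨ ∃ m : Fin p, v < m ∧ w = b m)}
  -- the enumeration
  have hplt : ∀ i : Fin (v.val - u.val + 1), u.val + i.val < p := by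
    intro i
    have h1 := i.isLt
    have h2 := v.isLt
    omega
  let emb : Fin (v.val - u.val + 1) → Fin p := fun i => ⟨u.val + i.val, hplt i⟩
  let b'' : Fin (v.val - u.val + 1) → V := fun i => b (emb i)
  have hule : u.val ≤ v.val := Fin.le_def.mp (le_of_lt huv)
  have hembu : ∀ i : Fin (v.val - u.val + 1), u ≤ emb i := by
    intro i; rw [Fin.le_def]; simp [emb]
  have hembv : ∀ i : Fin (v.val - u.val + 1), emb i ≤ v := by
    intro i; rw [Fin.le_def]; have := i.isLt; simp only [emb]; omega
  have hrange : Set.range b'' = Bs := by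
    ext w
    constructor
    · rintro ⟨i, rfl⟩
      exact ⟨emb i, ⟨hembu i, hembv i⟩, rfl⟩
    · rintro ⟨m, ⟨h1, h2⟩, rfl⟩
      have h1' := Fin.le_def.mp h1
      have h2' := Fin.le_def.mp h2
      refine ⟨⟨m.val - u.val, by omega⟩, ?_⟩
      show b _ = b m
      congr 1
      apply Fin.ext
      show u.val + (m.val - u.val) = m.val
      omega
  refine ⟨v.val - u.val + 1, b'', N, Ls, Rs, Cs, hrange, ?_⟩
  constructor
  · -- inj
    intro i j hij
    have := hB.inj hij
    have : (emb i).val = (emb j).val := congrArg Fin.val this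
    apply Fin.ext
    simpa [emb] using this
  · -- clique
    intro i j hij
    have hne : (emb i).val ≠ (emb j).val := by
      intro h
      apply hij
      apply Fin.ext
      simpa [emb] using h
    rcases lt_or_gt_of_ne hne with h | h
    · exact hclq (emb i) (emb j) (hembu i) (Fin.lt_def.mpr h) (hembv j)
    · exact (hclq (emb j) (emb i) (hembu j) (Fin.lt_def.mpr h) (hembv i)).symm
  · -- cover
    intro w hw
    rw [hrange] at hw
    by_cases hall : ∀ i : Fin p, u ≤ i → i ≤ v → G.Adj w (b i)
    · left; left; left; exact ⟨hw, hall⟩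
    push_neg at hall
    obtain ⟨i0, hi0u, hi0v, hi0⟩ := hall
    have hPnon : Pnon w := ⟨i0, hi0u, hi0v, hi0⟩
    by_cases hnone : ∀ i : Fin p, u ≤ i → i ≤ v → ¬ G.Adj w (b i)
    · right; exact ⟨hw, hnone⟩
    push_neg at hnone
    obtain ⟨i1, hi1u, hi1v, hi1⟩ := hnone
    have hPadj : Padj w := ⟨i1, hi1u, hi1v, hi1⟩
    by_cases hwr : w ∈ Set.range b
    · obtain ⟨m, rfl⟩ := hwr
      have hmnot : ¬ (u ≤ m ∧ m ≤ v) := by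
        intro h; exact hw ⟨m, h, rfl⟩
      rcases lt_or_ge m u with hmu | hmu
      · left; left; right
        exact ⟨hw, hPadj, hPnon, Or.inr ⟨m, hmu, rfl⟩⟩
      · have hvm : v < m := by
          by_contra h
          exact hmnot ⟨hmu, le_of_not_gt h⟩
        left; right
        exact ⟨hw, hPadj, hPnon, Or.inr ⟨m, hvm, rfl⟩⟩
    rcases hB.cover w hwr with (hwL | hwR) | hwC
    · left; left; right; exact ⟨hw, hPadj, hPnon, Or.inl hwL⟩
    · left; right; exact ⟨hw, hPadj, hPnon, Or.inl hwR⟩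
    · exfalso
      obtain ⟨i1, _, _, hi1⟩ := hPadj
      exact hB.noBC w hwC i1 hi1
  · -- disj
    have hBsN : Disjoint Bs N := by
      rw [Set.disjoint_left]; rintro w hwB ⟨hwn, -⟩; exact hwn hwB
    have hBsLs : Disjoint Bs Ls := by
      rw [Set.disjoint_left]; rintro w hwB ⟨hwn, -⟩; exact hwn hwB
    have hBsRs : Disjoint Bs Rs := by
      rw [Set.disjoint_left]; rintro w hwB ⟨hwn, -⟩; exact hwn hwB
    have hBsCs : Disjoint Bs Cs := by
      rw [Set.disjoint_left]; rintro w hwB ⟨hwn, -⟩; exact hwn hwB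
    have hNLs : Disjoint N Ls := by
      rw [Set.disjoint_left]
      rintro w ⟨-, hall⟩ ⟨-, -, ⟨i0, h1, h2, h3⟩, -⟩
      exact h3 (hall i0 h1 h2)
    have hNRs : Disjoint N Rs := by
      rw [Set.disjoint_left]
      rintro w ⟨-, hall⟩ ⟨-, -, ⟨i0, h1, h2, h3⟩, -⟩
      exact h3 (hall i0 h1 h2)
    have hNCs : Disjoint N Cs := by
      rw [Set.disjoint_left]
      rintro w ⟨-, hall⟩ ⟨-, hnone⟩
      exact hnone u le_rfl (le_of_lt huv) (hall u le_rfl (le_of_lt huv))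
    have hLsRs : Disjoint Ls Rs := by
      rw [Set.disjoint_left]
      rintro w ⟨-, -, -, hL⟩ ⟨-, -, -, hR⟩
      rcases hL with hL | ⟨m, hm, rfl⟩
      · rcases hR with hR | ⟨m', hm', heq⟩
        · exact Set.disjoint_left.mp hdLR hL hR
        · exact Set.disjoint_left.mp hdRL ⟨m', heq.symm⟩ hL
      · rcases hR with hR | ⟨m', hm', heq⟩
        · exact Set.disjoint_left.mp hdRR ⟨m, rfl⟩ hR
        · have : m = m' := hB.inj heq
          subst this
          exact absurd (lt_trans (lt_trans hm huv) hm') (lt_irrefl m)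
    have hLsCs : Disjoint Ls Cs := by
      rw [Set.disjoint_left]
      rintro w ⟨-, ⟨i0, h1, h2, h3⟩, -⟩ ⟨-, hnone⟩
      exact hnone i0 h1 h2 h3
    have hRsCs : Disjoint Rs Cs := by
      rw [Set.disjoint_left]
      rintro w ⟨-, ⟨i0, h1, h2, h3⟩, -⟩ ⟨-, hnone⟩
      exact hnone i0 h1 h2 h3
    rw [hrange]
    simp only [List.pairwise_cons, List.mem_cons, List.not_mem_nil,
      List.mem_singleton, List.Pairwise.nil]
    refine ⟨?_, ?_, ?_, ?_, fun _ h => h.elim, trivial⟩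
    · rintro S (rfl | rfl | rfl | rfl | h)
      exacts [hBsN, hBsLs, hBsRs, hBsCs, h.elim]
    · rintro S (rfl | rfl | rfl | h)
      exacts [hNLs, hNRs, hNCs, h.elim]
    · rintro S (rfl | rfl | h)
      exacts [hLsRs, hLsCs, h.elim]
    · rintro S (rfl | h)
      exacts [hRsCs, h.elim]
  · -- nAdj
    rintro w ⟨-, hall⟩ i
    exact hall (emb i) (hembu i) (hembv i)
  · -- cNotAdj
    rintro w ⟨-, hnone⟩ i
    exact hnone (emb i) (hembu i) (hembv i)
  · -- lrAdj
    rintro w (⟨-, ⟨i0, h1, h2, h3⟩, -⟩ | ⟨-, ⟨i0, h1, h2, h3⟩, -⟩) <;>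
    · have h1' := Fin.le_def.mp h1
      have h2' := Fin.le_def.mp h2
      refine ⟨⟨i0.val - u.val, by omega⟩, ?_⟩
      have : emb ⟨i0.val - u.val, by omega⟩ = i0 := by
        apply Fin.ext; show u.val + (i0.val - u.val) = i0.val; omega
      show G.Adj w (b (emb _))
      rw [this]; exact h3
  · -- lrNotAll
    rintro w (⟨-, -, ⟨i0, h1, h2, h3⟩, -⟩ | ⟨-, -, ⟨i0, h1, h2, h3⟩, -⟩) <;>
    · have h1' := Fin.le_def.mp h1
      have h2' := Fin.le_def.mp h2
      refine ⟨⟨i0.val - u.val, by omega⟩, ?_⟩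
      have : emb ⟨i0.val - u.val, by omega⟩ = i0 := by
        apply Fin.ext; show u.val + (i0.val - u.val) = i0.val; omega
      show ¬ G.Adj w (b (emb _))
      rw [this]; exact h3
  · -- rFirst
    rintro r ⟨-, -, hPnon, hr⟩ i hi
    have hei : emb i = u := by
      apply Fin.ext; show u.val + i.val = u.val; omega
    show ¬ G.Adj r (b (emb i))
    rw [hei]
    rcases hr with hr | ⟨m, hm, rfl⟩
    · exact hB.noEarlyR u (lt_of_le_of_lt hux hx2) r hr
    · intro hA
      obtain ⟨i0, h1, h2, h3⟩ := hPnon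
      exact h3 ((hallR m hm hA.symm i0 h1 h2).symm)
  · -- lLast
    rintro w ⟨-, -, hPnon, hw⟩ i hi
    have hei : emb i = v := by
      apply Fin.ext
      show u.val + i.val = v.val
      simp at hi
      omega
    show ¬ G.Adj w (b (emb i))
    rw [hei]
    rcases hw with hw | ⟨m, hm, rfl⟩
    · exact hB.noLateL v (lt_of_lt_of_le hx1 hxv) w hw
    · intro hA
      obtain ⟨i0, h1, h2, h3⟩ := hPnon
      exact h3 (hallL m hm hA i0 h1 h2)
  · -- rMono
    rintro i j hij r ⟨-, -, -, hr⟩ hA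
    have hIJ : (emb i).val + 1 = (emb j).val := by
      show u.val + i.val + 1 = u.val + j.val; omega
    rcases hr with hr | ⟨m, hm, rfl⟩
    · have hlI : l ≤ emb i := by
        by_contra h
        exact hB.noEarlyR (emb i) (lt_of_not_ge h) r hr hA.symm
      exact hB.rMono (emb i) (emb j) hlI hIJ r hr hA
    · show G.Adj (b (emb j)) (b m)
      have h1 : emb i < emb j := Fin.lt_def.mpr (by omega)
      have h2 : emb j < m := lt_of_le_of_lt (hembv j) hm
      exact (hB.umbrella (emb i) (emb j) m h1 h2 hA).2
  · -- lMono
    rintro i j hij w ⟨-, -, -, hw⟩ hA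
    have hIJ : (emb i).val + 1 = (emb j).val := by
      show u.val + i.val + 1 = u.val + j.val; omega
    rcases hw with hw | ⟨m, hm, rfl⟩
    · have hJl : emb j ≤ l' := by
        by_contra h
        exact hB.noLateL (emb j) (lt_of_not_ge h) w hw hA.symm
      exact hB.lMono (emb i) (emb j) hJl hIJ w hw hA
    · show G.Adj (b (emb i)) (b m)
      have h1 : m < emb i := lt_of_lt_of_le hm (hembu i)
      have h2 : emb i < emb j := Fin.lt_def.mpr (by omega)
      exact ((hB.umbrella m (emb i) (emb j) h1 h2 hA.symm).1).symm

/-- In a 2-branch with `B^R ≠ ∅` and `x ∈ B^R`, every inclusion-maximal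
`K`-join of `G` containing `x` is the interval of the umbrella ordering of
`B` determined by some extremal edge of `σ_B`. -/
theorem max_kjoin_in_two_branch [Fintype V] (G : SimpleGraph V) (p : ℕ)
    (b : Fin p → V) (L R C : Set V) (l l' : Fin p)
    (hB : TwoBranch G b L R C l l')
    (x : Fin p) (hx1 : l' < x) (hx2 : x < l)
    (B' : Set V) (hB' : IsKJoin G B') (hxB' : b x ∈ B')
    (hmax : ∀ B'' : Set V, IsKJoin G B'' → b x ∈ B'' → B' ⊆ B'' → B' = B'') :
    ∃ u v : Fin p, u < v ∧ G.Adj (b u) (b v) ∧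
      (∀ u' v' : Fin p, G.Adj (b u') (b v') → u' ≤ u → v ≤ v' →
        u' = u ∧ v' = v) ∧
      B' = b '' {w : Fin p | u ≤ w ∧ w ≤ v} := by
  classical
  obtain ⟨p', b', N', L', R', C', hr', hkj⟩ := hB'
  -- B' is a clique
  have hclB' : ∀ w ∈ B', ∀ w' ∈ B', w ≠ w' → G.Adj w w' := by
    intro w hw w' hw' hne
    rw [← hr'] at hw hw'
    obtain ⟨i, rfl⟩ := hw
    obtain ⟨j, rfl⟩ := hw'
    exact hkj.clique i j (fun h => hne (by rw [h]))
  -- B' lies in the range of b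
  have hsub : B' ⊆ Set.range b := by
    intro w hw
    by_cases hwe : w = b x
    · exact hwe ▸ ⟨x, rfl⟩
    have hadj : G.Adj w (b x) := hclB' w hw (b x) hxB' hwe
    by_contra hwr
    rcases hB.cover w hwr with (hwL | hwR) | hwC
    · exact hB.noLateL x hx1 w hwL hadj
    · exact hB.noEarlyR x hx2 w hwR hadj
    · exact hB.noBC w hwC x hadj
  let S : Finset (Fin p) := Finset.univ.filter (fun i => b i ∈ B')
  have hxS : x ∈ S := by simp [S, hxB']
  have hSne : S.Nonempty := ⟨x, hxS⟩
  set u := S.min' hSne with hudef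
  set v := S.max' hSne with hvdef
  have huS : u ∈ S := S.min'_mem hSne
  have hvS : v ∈ S := S.max'_mem hSne
  have hux : u ≤ x := S.min'_le x hxS
  have hxv : x ≤ v := S.le_max' x hxS
  have hmemS : ∀ i : Fin p, i ∈ S ↔ b i ∈ B' := by intro i; simp [S]
  have hBint : ∀ w ∈ B', w ∈ b '' {w : Fin p | u ≤ w ∧ w ≤ v} := by
    intro w hw
    obtain ⟨i, rfl⟩ := hsub hw
    have hiS : i ∈ S := (hmemS i).mpr hw
    exact ⟨i, ⟨S.min'_le i hiS, S.le_max' i hiS⟩, rfl⟩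
  -- u < v
  have huv : u < v := by
    rcases lt_or_ge u v with h | h
    · exact h
    exfalso
    have huvx : u = v := le_antisymm (le_trans hux hxv) h
    have hSx : ∀ i ∈ S, i = x := by
      intro i hiS
      have h1 : u ≤ i := S.min'_le i hiS
      have h2 : i ≤ v := S.le_max' i hiS
      have hxu : x = u := le_antisymm (huvx ▸ hxv) hux
      have hxv' : x = v := hxu.trans huvx
      exact le_antisymm (hxv' ▸ h2) (hxu ▸ h1)
    -- B' = {b x}; find a neighbor of b x in range b
    have hxr : b x ∈ Set.range b := ⟨x, rfl⟩
    have hl'r : b l' ∈ Set.range b := ⟨l', rfl⟩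
    have hne2 : (⟨b x, hxr⟩ : Set.range b) ≠ ⟨b l', hl'r⟩ := by
      intro h
      have : b x = b l' := congrArg Subtype.val h
      have := hB.inj this
      exact absurd (this ▸ hx1) (lt_irrefl _)
    obtain ⟨wlk⟩ := hB.connB.preconnected ⟨b x, hxr⟩ ⟨b l', hl'r⟩
    have hnn : ¬ wlk.Nil := SimpleGraph.Walk.not_nil_of_ne hne2
    have hadj2 := SimpleGraph.Walk.adj_snd (p := wlk) hnn
    obtain ⟨y, hy⟩ := (wlk.getVert 1).2
    have hax : G.Adj (b x) (b y) := by
      have h : G.Adj (b x) ((wlk.getVert 1) : V) := hadj2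
      rwa [← hy] at h
    have hyx : y ≠ x := by
      intro h
      exact G.irrefl (h ▸ hax)
    rcases lt_or_gt_of_ne hyx with hlt | hgt
    · have hK := interval_kjoin G b L R C l l' hB x y x hx1 hx2
        (le_of_lt hlt) le_rfl hlt hax.symm
      have hbxK : b x ∈ b '' {w : Fin p | y ≤ w ∧ w ≤ x} :=
        ⟨x, ⟨le_of_lt hlt, le_rfl⟩, rfl⟩
      have hsubK : B' ⊆ b '' {w : Fin p | y ≤ w ∧ w ≤ x} := by
        intro w hw
        obtain ⟨i, rfl⟩ := hsub hw
        have : i = x := hSx i ((hmemS i).mpr hw)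
        exact ⟨i, ⟨this ▸ le_of_lt hlt, this ▸ le_rfl⟩, rfl⟩
      have hEq := hmax _ hK hbxK hsubK
      have hyB : b y ∈ B' := by
        rw [hEq]; exact ⟨y, ⟨le_rfl, le_of_lt hlt⟩, rfl⟩
      exact hyx (hSx y ((hmemS y).mpr hyB))
    · have hK := interval_kjoin G b L R C l l' hB x x y hx1 hx2
        le_rfl (le_of_lt hgt) hgt hax
      have hbxK : b x ∈ b '' {w : Fin p | x ≤ w ∧ w ≤ y} :=
        ⟨x, ⟨le_rfl, le_of_lt hgt⟩, rfl⟩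
      have hsubK : B' ⊆ b '' {w : Fin p | x ≤ w ∧ w ≤ y} := by
        intro w hw
        obtain ⟨i, rfl⟩ := hsub hw
        have : i = x := hSx i ((hmemS i).mpr hw)
        exact ⟨i, ⟨this ▸ le_rfl, this ▸ le_of_lt hgt⟩, rfl⟩
      have hEq := hmax _ hK hbxK hsubK
      have hyB : b y ∈ B' := by
        rw [hEq]; exact ⟨y, ⟨le_of_lt hgt, le_rfl⟩, rfl⟩
      exact hyx (hSx y ((hmemS y).mpr hyB))
  -- b u and b v are adjacent
  have hadjuv : G.Adj (b u) (b v) := by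
    apply hclB' (b u) ((hmemS u).mp huS) (b v) ((hmemS v).mp hvS)
    intro h
    exact absurd (hB.inj h ▸ huv) (lt_irrefl _)
  have hK := interval_kjoin G b L R C l l' hB x u v hx1 hx2 hux hxv huv hadjuv
  have hbxK : b x ∈ b '' {w : Fin p | u ≤ w ∧ w ≤ v} := ⟨x, ⟨hux, hxv⟩, rfl⟩
  have hEq := hmax _ hK hbxK hBint
  refine ⟨u, v, huv, hadjuv, ?_, hEq⟩
  intro u' v' hA hu' hv'
  have huv' : u' < v' := lt_of_le_of_lt hu' (lt_of_lt_of_le huv hv')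
  have hK' := interval_kjoin G b L R C l l' hB x u' v' hx1 hx2
    (le_trans hu' hux) (le_trans hxv hv') huv' hA
  have hbxK' : b x ∈ b '' {w : Fin p | u' ≤ w ∧ w ≤ v'} :=
    ⟨x, ⟨le_trans hu' hux, le_trans hxv hv'⟩, rfl⟩
  have hsubK' : B' ⊆ b '' {w : Fin p | u' ≤ w ∧ w ≤ v'} := by
    rw [hEq]
    rintro w ⟨i, ⟨h1, h2⟩, rfl⟩
    exact ⟨i, ⟨le_trans hu' h1, le_trans h2 hv'⟩, rfl⟩
  have hEq' := hmax _ hK' hbxK' hsubK'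
  have huB : b u' ∈ B' := by
    rw [hEq']; exact ⟨u', ⟨le_rfl, le_of_lt huv'⟩, rfl⟩
  have hvB : b v' ∈ B' := by
    rw [hEq']; exact ⟨v', ⟨le_of_lt huv', le_rfl⟩, rfl⟩
  rw [hEq] at huB hvB
  obtain ⟨mu, ⟨hmu1, hmu2⟩, hmu3⟩ := huB
  obtain ⟨mv, ⟨hmv1, hmv2⟩, hmv3⟩ := hvB
  have hmu : mu = u' := hB.inj hmu3
  have hmv : mv = v' := hB.inj hmv3
  subst hmu hmv
  exact ⟨le_antisymm hu' hmu1, le_antisymm hmv2 hv'⟩
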